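/- Assume m is odd and l′ is even (case (iv)). Then the set Δ_{s^{−1}} = {α ∈ Δ₊ : s^{−1}α ∈ Δ₋} consists exactly of the following roots: the roots α_{2t−1} + α_{2t} + α_{2t+1} for 1 ≤ t ≤ (m−1)/2; the roots α_m + α_{m+1} + ⋯ + α_{m+q} for 1 ≤ q ≤ p; the root γ′ = α_m + ⋯ + α_{m+p+2}; the roots α_i + α_{i+1} + ⋯ + α_{m+p+2} for m+2 ≤ i ≤ m+p+2; the roots α_{m+p+2t} + α_{m+p+2t+1} + α_{m+p+2t+2} for 1 ≤ t ≤ (m−1)/2; the root α_{m+p+m+1} + α_{m+p+m+2}; and the simple roots α_1, α_3, …, α_m and α_{m+p+2}, α_{m+p+4}, …, α_{m+p+m+1}. -/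

import Mathlib

/- Common framework: type A_l root system realized in ℝ^{ℕ} (coordinates 1,…,l+1 used),
   the Weyl group as permutations of ℕ acting by permuting coordinates, and the
   Weyl group element s = s₁s₂ of Proposition 4.2 (all four parity cases). -/

noncomputable section

namespace DPW

/-- The ambient vector space (only coordinates 1,…,l+1 are used). -/
abbrev V : Type := ℕ → ℝ

/-- Standard basis vector e_i. -/
def evec (i : ℕ) : V := fun j => if j = i then 1 else 0

/-- The root e_i − e_j. -/
def rt (i j : ℕ) : V := evec i - evec j

/-- The root system Δ of type A_l. -/
def Delta (l : ℕ) : Set V :=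
  {v | ∃ i j, 1 ≤ i ∧ i ≤ l + 1 ∧ 1 ≤ j ∧ j ≤ l + 1 ∧ i ≠ j ∧ v = rt i j}

/-- Positive roots Δ₊. -/
def DeltaPos (l : ℕ) : Set V :=
  {v | ∃ i j, 1 ≤ i ∧ i < j ∧ j ≤ l + 1 ∧ v = rt i j}

/-- Negative roots Δ₋ = −Δ₊. -/
def DeltaNeg (l : ℕ) : Set V := {v | -v ∈ DeltaPos l}

/-- Action of a permutation on V : (σ·v)_j = v_{σ⁻¹(j)}. -/
def pact (σ : Equiv.Perm ℕ) (v : V) : V := fun j => v (σ⁻¹ j)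

/-- row(e_a − e_b) = a. -/
def rowOf (v : V) : ℕ := sInf {a | v a = 1}

/-- col(e_a − e_b) = b. -/
def colOf (v : V) : ℕ := sInf {b | v b = (-1 : ℝ)}

/-- Product of the simple reflections s_{α_i} = (i, i+1) for i in a list. -/
def swapProd (idxs : List ℕ) : Equiv.Perm ℕ :=
  (idxs.map (fun i => Equiv.swap i (i + 1))).prod

/-- The Weyl group element s = s₁s₂ (cases (i)–(iv) according to the parities of
    m = ⌊(l′−1)/2⌋ and l′; here p = l − l′ and s_γ = (m+1, m+p+2)). -/
def weylS (l l' : ℕ) : Equiv.Perm ℕ :=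
  let m := (l' - 1) / 2
  let p := l - l'
  if m % 2 = 0 then
    if l' % 2 = 1 then
      -- case (i)
      (swapProd (List.range' 2 (m / 2) 2) * swapProd (List.range' (m + p + 2) (m / 2) 2)) *
        (swapProd (List.range' 1 (m / 2) 2) * Equiv.swap (m + 1) (m + p + 2) *
          swapProd (List.range' (m + p + 3) (m / 2) 2))
    else
      -- case (ii)
      (swapProd (List.range' 2 (m / 2) 2) * swapProd (List.range' (m + p + 2) (m / 2 + 1) 2)) *
        (swapProd (List.range' 1 (m / 2) 2) * Equiv.swap (m + 1) (m + p + 2) *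
          swapProd (List.range' (m + p + 3) (m / 2) 2))
  else
    if l' % 2 = 1 then
      -- case (iii)
      (swapProd (List.range' 1 ((m + 1) / 2) 2) *
          swapProd (List.range' (m + p + 2) ((m + 1) / 2) 2)) *
        (swapProd (List.range' 2 ((m - 1) / 2) 2) * Equiv.swap (m + 1) (m + p + 2) *
          swapProd (List.range' (m + p + 3) ((m - 1) / 2) 2))
    else
      -- case (iv)
      (swapProd (List.range' 1 ((m + 1) / 2) 2) *
          swapProd (List.range' (m + p + 2) ((m + 1) / 2) 2)) *
        (swapProd (List.range' 2 ((m - 1) / 2) 2) * Equiv.swap (m + 1) (m + p + 2) *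
          swapProd (List.range' (m + p + 3) ((m + 1) / 2) 2))

/-- Δ_s = {α ∈ Δ₊ : sα ∈ Δ₋}. -/
def DeltaS (l : ℕ) (s : Equiv.Perm ℕ) : Set V :=
  {v ∈ DeltaPos l | pact s v ∈ DeltaNeg l}

/-- Δ_{s⁻¹} = {α ∈ Δ₊ : s⁻¹α ∈ Δ₋}. -/
def DeltaSinv (l : ℕ) (s : Equiv.Perm ℕ) : Set V :=
  {v ∈ DeltaPos l | pact s⁻¹ v ∈ DeltaNeg l}

/-- (Δ̄_K)₊ = {α ∈ Δ₊ : sα ≠ α}. -/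
def DeltaKpos (l : ℕ) (s : Equiv.Perm ℕ) : Set V :=
  {v ∈ DeltaPos l | pact s v ≠ v}

/-- (Δ̄_K)₋ = −(Δ̄_K)₊. -/
def DeltaKneg (l : ℕ) (s : Equiv.Perm ℕ) : Set V := {v | -v ∈ DeltaKpos l s}

/-- Δ^C = {α ∈ (Δ̄_K)₊ : row(sα) = row(α)}. -/
def DeltaC (l : ℕ) (s : Equiv.Perm ℕ) : Set V :=
  {v ∈ DeltaKpos l s | rowOf (pact s v) = rowOf v}

/-- Δ^R = {α ∈ (Δ̄_K)₊ : col(sα) = col(α)}. -/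
def DeltaR (l : ℕ) (s : Equiv.Perm ℕ) : Set V :=
  {v ∈ DeltaKpos l s | colOf (pact s v) = colOf v}

/-- Δ^O = (Δ̄_K)₊ \ (Δ^C ∪ Δ^R). -/
def DeltaO (l : ℕ) (s : Equiv.Perm ℕ) : Set V :=
  DeltaKpos l s \ (DeltaC l s ∪ DeltaR l s)

/-- Δ₁^O = {α ∈ Δ^O : row(α) ≥ m+p+2}. -/
def DeltaO1 (l : ℕ) (s : Equiv.Perm ℕ) (m p : ℕ) : Set V :=
  {v ∈ DeltaO l s | m + p + 2 ≤ rowOf v}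

/-- Δ₂^O = {α ∈ Δ^O : col(α) ≤ m+1}. -/
def DeltaO2 (l : ℕ) (s : Equiv.Perm ℕ) (m : ℕ) : Set V :=
  {v ∈ DeltaO l s | colOf v ≤ m + 1}

/-- Δ₃^O = Δ^O \ (Δ₁^O ∪ Δ₂^O). -/
def DeltaO3 (l : ℕ) (s : Equiv.Perm ℕ) (m p : ℕ) : Set V :=
  DeltaO l s \ (DeltaO1 l s m p ∪ DeltaO2 l s m)

/-- Δ̄_K^k = {α ∈ (Δ̄_K)₊ : s^{−j}α ∈ (Δ̄_K)₊ for 1 ≤ j ≤ k−1 and s^{−k}α ∈ (Δ̄_K)₋}. -/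
def DeltaKk (l : ℕ) (s : Equiv.Perm ℕ) (k : ℕ) : Set V :=
  {v ∈ DeltaKpos l s |
    (∀ j, 1 ≤ j → j ≤ k - 1 → pact (s⁻¹ ^ j) v ∈ DeltaKpos l s) ∧
      pact (s⁻¹ ^ k) v ∈ DeltaKneg l s}

/-- d(α) = min{k ≥ 1 : s^{−k}α ∈ Δ₋}. -/
def dd (l : ℕ) (s : Equiv.Perm ℕ) (v : V) : ℕ :=
  sInf {k | 1 ≤ k ∧ pact (s⁻¹ ^ k) v ∈ DeltaNeg l}

/-- Δ_Z = {e_i − e_j : m+2 ≤ i, j ≤ m+p+1, i ≠ j}. -/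
def DeltaZ (m p : ℕ) : Set V :=
  {v | ∃ i j, m + 2 ≤ i ∧ i ≤ m + p + 1 ∧ m + 2 ≤ j ∧ j ≤ m + p + 1 ∧ i ≠ j ∧ v = rt i j}

/-- The ⟨s⟩-orbit of a vector. -/
def orbitOf (s : Equiv.Perm ℕ) (v : V) : Set V := {w | ∃ n : ℤ, w = pact (s ^ n) v}

/-- The set P_κ (for κ ∈ Δ̄_K^k). -/
def Pk (l : ℕ) (s : Equiv.Perm ℕ) (k : ℕ) (κ : V) : Set (V × V) :=
  {q | (∃ i, 2 ≤ i ∧ i ≤ k - 1 ∧ q.1 ∈ DeltaKk l s i) ∧ q.2 ∈ DeltaKk l s k ∧ κ = q.1 + q.2}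

/-- The set P′_κ (for κ ∈ Δ̄_K^k). -/
def Pk' (l : ℕ) (s : Equiv.Perm ℕ) (k : ℕ) (κ : V) : Set (V × V) :=
  {q | q.1 ∈ DeltaKk l s k ∧ q.2 ∈ DeltaKk l s k ∧ κ = q.1 + q.2}

/-- The eigenvector v^λ of case (i) (m even, l′ = 2m+1 odd). -/
def vlam (m p : ℕ) (lam : ℂ) : ℕ → ℂ := fun j =>
  if j = 0 then 0
  else if j ≤ m + 1 then
    (if j % 2 = 1 then lam ^ ((4 * m + 5 - j) / 2) else lam ^ (j / 2))
  else if j ≤ m + p + 1 then 0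
  else if j ≤ m + p + m + 2 then
    (if (j - (m + p)) % 2 = 0 then lam ^ ((m + (j - (m + p))) / 2)
     else lam ^ ((3 * m + 5 - (j - (m + p))) / 2))
  else 0



/-! ### Auxiliary lemmas for stmt6 -/

lemma swapProd_range'_apply (n a j : ℕ) :
    swapProd (List.range' a n 2) j =
      if a ≤ j ∧ j < a + 2 * n then (if (j - a) % 2 = 0 then j + 1 else j - 1) else j := by
  induction n generalizing a with
  | zero => simp only [List.range', swapProd, List.map_nil, List.prod_nil,
      Equiv.Perm.one_apply]; split_ifs <;> omega
  | succ n ih =>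
    rw [List.range'_succ]
    simp only [swapProd, List.map_cons, List.prod_cons, Equiv.Perm.mul_apply]
    rw [show (List.map (fun i => Equiv.swap i (i + 1)) (List.range' (a + 2) n 2)).prod =
        swapProd (List.range' (a + 2) n 2) from rfl, ih (a + 2), Equiv.swap_apply_def]
    split_ifs <;> omega

/-- Explicit form of s₂ in case (iv). -/
def s2fun (m p j : ℕ) : ℕ :=
  if 2 ≤ j ∧ j ≤ m ∧ j % 2 = 0 then j + 1
  else if 2 ≤ j ∧ j ≤ m ∧ j % 2 = 1 then j - 1
  else if j = m + 1 then m + p + 2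
  else if j = m + p + 2 then m + 1
  else if m + p + 3 ≤ j ∧ j ≤ m + p + m + 3 ∧ (j - (m + p)) % 2 = 1 then j + 1
  else if m + p + 3 ≤ j ∧ j ≤ m + p + m + 3 ∧ (j - (m + p)) % 2 = 0 then j - 1
  else j

/-- Explicit form of s₁ in case (iv). -/
def s1fun (m p j : ℕ) : ℕ :=
  if 1 ≤ j ∧ j ≤ m + 1 ∧ j % 2 = 1 then j + 1
  else if 1 ≤ j ∧ j ≤ m + 1 ∧ j % 2 = 0 then j - 1
  else if m + p + 2 ≤ j ∧ j ≤ m + p + m + 2 ∧ (j - (m + p)) % 2 = 0 then j + 1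
  else if m + p + 2 ≤ j ∧ j ≤ m + p + m + 2 ∧ (j - (m + p)) % 2 = 1 then j - 1
  else j

/-- Explicit form of s⁻¹ in case (iv). -/
def giv (m p j : ℕ) : ℕ :=
  if j = 2 then 1
  else if j % 2 = 1 ∧ 1 ≤ j ∧ j ≤ m - 2 then j + 2
  else if j % 2 = 0 ∧ 4 ≤ j ∧ j ≤ m + 1 then j - 2
  else if j = m then m + p + 2
  else if m + 2 ≤ j ∧ j ≤ m + p + 1 then j
  else if j = m + p + 3 then m + 1
  else if m + p + 2 ≤ j ∧ j ≤ m + p + m + 1 ∧ (j - (m + p)) % 2 = 0 then j + 2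
  else if m + p + 5 ≤ j ∧ j ≤ m + p + m + 2 ∧ (j - (m + p)) % 2 = 1 then j - 2
  else if j = m + p + m + 3 then j - 1
  else j

lemma weylS_iv (l l' m p : ℕ) (hm : m = (l' - 1) / 2) (hp : p = l - l')
    (hmo : m % 2 = 1) (hle : l' % 2 = 0) :
    weylS l l' =
      (swapProd (List.range' 1 ((m + 1) / 2) 2) *
          swapProd (List.range' (m + p + 2) ((m + 1) / 2) 2)) *
        (swapProd (List.range' 2 ((m - 1) / 2) 2) * Equiv.swap (m + 1) (m + p + 2) *
          swapProd (List.range' (m + p + 3) ((m + 1) / 2) 2)) := by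
  subst hm hp
  simp only [weylS]
  rw [if_neg (by omega), if_neg (by omega)]


set_option maxHeartbeats 2000000 in
lemma s2_apply (m p : ℕ) (hm3 : 3 ≤ m) (hmo : m % 2 = 1) (j : ℕ) :
    (swapProd (List.range' 2 ((m - 1) / 2) 2) * Equiv.swap (m + 1) (m + p + 2) *
      swapProd (List.range' (m + p + 3) ((m + 1) / 2) 2)) j = s2fun m p j := by
  rw [Equiv.Perm.mul_apply, Equiv.Perm.mul_apply]
  generalize hx : swapProd (List.range' (m + p + 3) ((m + 1) / 2) 2) j = x
  rw [swapProd_range'_apply] at hx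
  generalize hy : Equiv.swap (m + 1) (m + p + 2) x = y
  rw [Equiv.swap_apply_def] at hy
  rw [swapProd_range'_apply]
  simp only [s2fun]
  split_ifs at hx <;> split_ifs at hy <;> split_ifs <;> omega

set_option maxHeartbeats 2000000 in
lemma s1_apply (m p : ℕ) (hm3 : 3 ≤ m) (hmo : m % 2 = 1) (j : ℕ) :
    (swapProd (List.range' 1 ((m + 1) / 2) 2) *
      swapProd (List.range' (m + p + 2) ((m + 1) / 2) 2)) j = s1fun m p j := by
  rw [Equiv.Perm.mul_apply]
  generalize hx : swapProd (List.range' (m + p + 2) ((m + 1) / 2) 2) j = x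
  rw [swapProd_range'_apply] at hx
  rw [swapProd_range'_apply]
  simp only [s1fun]
  split_ifs at hx <;> split_ifs <;> omega

set_option maxHeartbeats 1000000 in
lemma giv_spec (m p : ℕ) (hm3 : 3 ≤ m) (hmo : m % 2 = 1) (j : ℕ) :
    (j = 2 ∧ giv m p j = 1) ∨
    (j % 2 = 1 ∧ 1 ≤ j ∧ j ≤ m - 2 ∧ giv m p j = j + 2) ∨
    (j % 2 = 0 ∧ 4 ≤ j ∧ j ≤ m + 1 ∧ giv m p j = j - 2) ∨
    (j = m ∧ giv m p j = m + p + 2) ∨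
    (m + 2 ≤ j ∧ j ≤ m + p + 1 ∧ giv m p j = j) ∨
    (j = m + p + 3 ∧ giv m p j = m + 1) ∨
    (m + p + 2 ≤ j ∧ j ≤ m + p + m + 1 ∧ (j - (m + p)) % 2 = 0 ∧ giv m p j = j + 2) ∨
    (m + p + 5 ≤ j ∧ j ≤ m + p + m + 2 ∧ (j - (m + p)) % 2 = 1 ∧ giv m p j = j - 2) ∨
    (j = m + p + m + 3 ∧ giv m p j = m + p + m + 2) ∨
    ((j = 0 ∨ m + p + m + 4 ≤ j) ∧ giv m p j = j) := by
  generalize hx : giv m p j = x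
  simp only [giv] at hx
  split_ifs at hx <;>
    first
    | exact Or.inl (by omega)
    | exact Or.inr (Or.inl (by omega))
    | exact Or.inr (Or.inr (Or.inl (by omega)))
    | exact Or.inr (Or.inr (Or.inr (Or.inl (by omega))))
    | exact Or.inr (Or.inr (Or.inr (Or.inr (Or.inl (by omega)))))
    | exact Or.inr (Or.inr (Or.inr (Or.inr (Or.inr (Or.inl (by omega))))))
    | exact Or.inr (Or.inr (Or.inr (Or.inr (Or.inr (Or.inr (Or.inl (by omega)))))))
    | exact Or.inr (Or.inr (Or.inr (Or.inr (Or.inr (Or.inr (Or.inr (Or.inl (by omega))))))))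
    | exact Or.inr (Or.inr (Or.inr (Or.inr (Or.inr (Or.inr (Or.inr (Or.inr (Or.inl (by omega)))))))))
    | exact Or.inr (Or.inr (Or.inr (Or.inr (Or.inr (Or.inr (Or.inr (Or.inr (Or.inr (by omega)))))))))

set_option maxHeartbeats 1000000 in
lemma s2fun_spec (m p : ℕ) (hm3 : 3 ≤ m) (hmo : m % 2 = 1) (x : ℕ) :
    (2 ≤ x ∧ x ≤ m ∧ x % 2 = 0 ∧ s2fun m p x = x + 1) ∨
    (3 ≤ x ∧ x ≤ m ∧ x % 2 = 1 ∧ s2fun m p x = x - 1) ∨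
    (x = m + 1 ∧ s2fun m p x = m + p + 2) ∨
    (x = m + p + 2 ∧ s2fun m p x = m + 1) ∨
    (m + p + 3 ≤ x ∧ x ≤ m + p + m + 2 ∧ (x - (m + p)) % 2 = 1 ∧ s2fun m p x = x + 1) ∨
    (m + p + 4 ≤ x ∧ x ≤ m + p + m + 3 ∧ (x - (m + p)) % 2 = 0 ∧ s2fun m p x = x - 1) ∨
    ((x ≤ 1 ∨ (m + 2 ≤ x ∧ x ≤ m + p + 1) ∨ m + p + m + 4 ≤ x) ∧ s2fun m p x = x) := by
  generalize hx : s2fun m p x = y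
  simp only [s2fun] at hx
  split_ifs at hx <;>
    first
    | exact Or.inl (by omega)
    | exact Or.inr (Or.inl (by omega))
    | exact Or.inr (Or.inr (Or.inl (by omega)))
    | exact Or.inr (Or.inr (Or.inr (Or.inl (by omega))))
    | exact Or.inr (Or.inr (Or.inr (Or.inr (Or.inl (by omega)))))
    | exact Or.inr (Or.inr (Or.inr (Or.inr (Or.inr (Or.inl (by omega))))))
    | exact Or.inr (Or.inr (Or.inr (Or.inr (Or.inr (Or.inr (by omega))))))

set_option maxHeartbeats 1000000 in
lemma s1fun_spec (m p : ℕ) (hm3 : 3 ≤ m) (hmo : m % 2 = 1) (x : ℕ) :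
    (1 ≤ x ∧ x ≤ m + 1 ∧ x % 2 = 1 ∧ s1fun m p x = x + 1) ∨
    (2 ≤ x ∧ x ≤ m + 1 ∧ x % 2 = 0 ∧ s1fun m p x = x - 1) ∨
    (m + p + 2 ≤ x ∧ x ≤ m + p + m + 1 ∧ (x - (m + p)) % 2 = 0 ∧ s1fun m p x = x + 1) ∨
    (m + p + 3 ≤ x ∧ x ≤ m + p + m + 2 ∧ (x - (m + p)) % 2 = 1 ∧ s1fun m p x = x - 1) ∨
    ((x = 0 ∨ (m + 2 ≤ x ∧ x ≤ m + p + 1) ∨ m + p + m + 3 ≤ x) ∧ s1fun m p x = x) := by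
  generalize hx : s1fun m p x = y
  simp only [s1fun] at hx
  split_ifs at hx <;>
    first
    | exact Or.inl (by omega)
    | exact Or.inr (Or.inl (by omega))
    | exact Or.inr (Or.inr (Or.inl (by omega)))
    | exact Or.inr (Or.inr (Or.inr (Or.inl (by omega))))
    | exact Or.inr (Or.inr (Or.inr (Or.inr (by omega))))

set_option maxHeartbeats 1000000 in
lemma s_giv (m p : ℕ) (hm3 : 3 ≤ m) (hmo : m % 2 = 1) (j : ℕ) :
    s1fun m p (s2fun m p (giv m p j)) = j := by
  rcases giv_spec m p hm3 hmo j with h1|h1|h1|h1|h1|h1|h1|h1|h1|h1 <;>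
  rcases s2fun_spec m p hm3 hmo (giv m p j) with h2|h2|h2|h2|h2|h2|h2 <;>
  rcases s1fun_spec m p hm3 hmo (s2fun m p (giv m p j)) with h3|h3|h3|h3|h3 <;>
  omega

lemma sinv_apply (l l' m p : ℕ) (hm : m = (l' - 1) / 2) (hp : p = l - l')
    (hm3 : 3 ≤ m) (hmo : m % 2 = 1) (hle : l' % 2 = 0) (j : ℕ) :
    (weylS l l')⁻¹ j = giv m p j := by
  have h : weylS l l' (giv m p j) = j := by
    rw [weylS_iv l l' m p hm hp hmo hle, Equiv.Perm.mul_apply,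
      s2_apply m p hm3 hmo, s1_apply m p hm3 hmo, s_giv m p hm3 hmo]
  conv_lhs => rw [← h]
  rw [Equiv.Perm.inv_eq_iff_eq]

set_option maxHeartbeats 1000000 in
lemma giv_bounds (m p : ℕ) (hm3 : 3 ≤ m) (hmo : m % 2 = 1) (j : ℕ) (h1 : 1 ≤ j)
    (h2 : j ≤ m + p + m + 3) :
    1 ≤ giv m p j ∧ giv m p j ≤ m + p + m + 3 := by
  rcases giv_spec m p hm3 hmo j with h|h|h|h|h|h|h|h|h|h <;> omega

set_option maxHeartbeats 1000000 in
lemma giv_lt_iff (m p : ℕ) (hm3 : 3 ≤ m) (hmo : m % 2 = 1) (i j : ℕ)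
    (h1 : 1 ≤ i) (h2 : i < j) (h3 : j ≤ m + p + m + 3) :
    giv m p j < giv m p i ↔
      ((i % 2 = 1 ∧ i + 2 ≤ m ∧ j = i + 3) ∨
        (i = m ∧ m + 2 ≤ j ∧ j ≤ m + p + 1) ∨
        (i = m ∧ j = m + p + 3) ∨
        (m + 2 ≤ i ∧ i ≤ m + p + 2 ∧ j = m + p + 3) ∨
        (m + p + 2 ≤ i ∧ (i - (m + p)) % 2 = 0 ∧ i + 1 ≤ m + p + m ∧ j = i + 3) ∨
        (i = m + p + m + 1 ∧ j = m + p + m + 3) ∨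
        (i % 2 = 1 ∧ i ≤ m ∧ j = i + 1) ∨
        (m + p + 2 ≤ i ∧ (i - (m + p)) % 2 = 0 ∧ i ≤ m + p + m + 1 ∧ j = i + 1)) := by
  rcases giv_spec m p hm3 hmo i with hi|hi|hi|hi|hi|hi|hi|hi|hi|hi <;>
  rcases giv_spec m p hm3 hmo j with hj|hj|hj|hj|hj|hj|hj|hj|hj|hj <;>
    exact ⟨fun hlt => by
        by_cases hij1 : j = i + 1 <;>
          first
            | exact Or.inl (by omega)
            | exact Or.inr (Or.inl (by omega))
            | exact Or.inr (Or.inr (Or.inl (by omega)))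
            | exact Or.inr (Or.inr (Or.inr (Or.inl (by omega))))
            | exact Or.inr (Or.inr (Or.inr (Or.inr (Or.inl (by omega)))))
            | exact Or.inr (Or.inr (Or.inr (Or.inr (Or.inr (Or.inl (by omega))))))
            | exact Or.inr (Or.inr (Or.inr (Or.inr (Or.inr (Or.inr (Or.inl (by omega)))))))
            | exact Or.inr (Or.inr (Or.inr (Or.inr (Or.inr (Or.inr (Or.inr (by omega))))))),
      fun hqf => by rcases hqf with h|h|h|h|h|h|h|h <;> omega⟩

lemma neg_rt (a b : ℕ) : -rt a b = rt b a := by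
  simp [rt, neg_sub]

lemma rt_inj {a b c d : ℕ} (hcd : c ≠ d) (h : rt a b = rt c d) : a = c ∧ b = d := by
  have e1 : rt a b c = 1 := by rw [h]; simp [rt, evec, hcd]
  have e2 : rt a b d = -1 := by rw [h]; simp [rt, evec, Ne.symm hcd]
  simp only [rt, evec, Pi.sub_apply] at e1 e2
  split_ifs at e1 e2 <;> norm_num at e1 <;> norm_num at e2 <;> omega

lemma rt_mem_deltaNeg (l a b : ℕ) : rt a b ∈ DeltaNeg l ↔ 1 ≤ b ∧ b < a ∧ a ≤ l + 1 := by
  constructor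
  · rintro ⟨i, j, h1, h2, h3, he⟩
    rw [neg_rt] at he
    obtain ⟨hbi, haj⟩ := rt_inj (Nat.ne_of_lt h2) he
    omega
  · rintro ⟨h1, h2, h3⟩
    exact ⟨b, a, h1, h2, h3, neg_rt a b⟩

lemma pact_rt (σ : Equiv.Perm ℕ) (a b : ℕ) : pact σ (rt a b) = rt (σ a) (σ b) := by
  funext x
  simp only [pact, rt, evec, Pi.sub_apply, Equiv.Perm.inv_eq_iff_eq]


set_option maxHeartbeats 1000000 in
/-- explicit description of Δ_{s⁻¹} in case (iv) (m odd, l′ even). -/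
theorem stmt6 (l l' m p : ℕ) (h5 : 5 ≤ l') (hll : l' ≤ l)
    (hm : m = (l' - 1) / 2) (hp : p = l - l')
    (hmo : m % 2 = 1) (hle : l' % 2 = 0) :
    DeltaSinv l (weylS l l') =
      {v | (∃ t, 1 ≤ t ∧ t ≤ (m - 1) / 2 ∧ v = rt (2 * t - 1) (2 * t + 2)) ∨
        (∃ q, 1 ≤ q ∧ q ≤ p ∧ v = rt m (m + q + 1)) ∨
        v = rt m (m + p + 3) ∨
        (∃ i, m + 2 ≤ i ∧ i ≤ m + p + 2 ∧ v = rt i (m + p + 3)) ∨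
        (∃ t, 1 ≤ t ∧ t ≤ (m - 1) / 2 ∧ v = rt (m + p + 2 * t) (m + p + 2 * t + 3)) ∨
        v = rt (m + p + m + 1) (m + p + m + 3) ∨
        (∃ t, 1 ≤ t ∧ t ≤ (m + 1) / 2 ∧ v = rt (2 * t - 1) (2 * t)) ∨
        (∃ t, 1 ≤ t ∧ t ≤ (m + 1) / 2 ∧ v = rt (m + p + 2 * t) (m + p + 2 * t + 1))} := by
  have hl' : l' = 2 * m + 2 := by omega
  have hm3 : 3 ≤ m := by omega
  have hl1 : l + 1 = m + p + m + 3 := by omega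
  have hsinv : ∀ x, (weylS l l')⁻¹ x = giv m p x :=
    sinv_apply l l' m p hm hp hm3 hmo hle
  have main : ∀ a b : ℕ, 1 ≤ a → a < b → b ≤ l + 1 → giv m p b < giv m p a →
      rt a b ∈ DeltaSinv l (weylS l l') := by
    intro a b h1 h2 h3 h4
    refine ⟨⟨a, b, h1, h2, h3, rfl⟩, ?_⟩
    rw [pact_rt, hsinv, hsinv, rt_mem_deltaNeg]
    have ba := giv_bounds m p hm3 hmo a (by omega) (by omega)
    have bb := giv_bounds m p hm3 hmo b (by omega) (by omega)
    exact ⟨by omega, h4, by omega⟩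
  ext v
  constructor
  · rintro ⟨⟨i, j, hi1, hij, hjl, rfl⟩, hneg⟩
    rw [pact_rt, hsinv, hsinv, rt_mem_deltaNeg] at hneg
    have hqf := (giv_lt_iff m p hm3 hmo i j hi1 hij (by omega)).mp hneg.2.1
    simp only [Set.mem_setOf_eq]
    rcases hqf with h | h | h | h | h | h | h | h
    · exact Or.inl ⟨(i + 1) / 2, by omega, by omega,
        by rw [show 2 * ((i + 1) / 2) - 1 = i from by omega,
          show 2 * ((i + 1) / 2) + 2 = j from by omega]⟩
    · exact Or.inr (Or.inl ⟨j - m - 1, by omega, by omega,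
        by rw [h.1, show m + (j - m - 1) + 1 = j from by omega]⟩)
    · exact Or.inr (Or.inr (Or.inl (by rw [h.1, h.2])))
    · exact Or.inr (Or.inr (Or.inr (Or.inl ⟨i, h.1, h.2.1, by rw [h.2.2]⟩)))
    · exact Or.inr (Or.inr (Or.inr (Or.inr (Or.inl ⟨(i - (m + p)) / 2, by omega, by omega,
        by rw [show m + p + 2 * ((i - (m + p)) / 2) = i from by omega,
          show i + 3 = j from by omega]⟩))))
    · exact Or.inr (Or.inr (Or.inr (Or.inr (Or.inr (Or.inl (by rw [h.1, h.2]))))))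
    · exact Or.inr (Or.inr (Or.inr (Or.inr (Or.inr (Or.inr (Or.inl ⟨(i + 1) / 2, by omega,
        by omega, by rw [show 2 * ((i + 1) / 2) - 1 = i from by omega,
          show 2 * ((i + 1) / 2) = j from by omega]⟩))))))
    · exact Or.inr (Or.inr (Or.inr (Or.inr (Or.inr (Or.inr (Or.inr
        ⟨(i - (m + p)) / 2, by omega, by omega,
          by rw [show m + p + 2 * ((i - (m + p)) / 2) = i from by omega,
            show i + 1 = j from by omega]⟩))))))
  · intro hv
    simp only [Set.mem_setOf_eq] at hv
    rcases hv with ⟨t, ht1, ht2, rfl⟩ | ⟨q, hq1, hq2, rfl⟩ | rfl | ⟨i, hi1, hi2, rfl⟩ |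
      ⟨t, ht1, ht2, rfl⟩ | rfl | ⟨t, ht1, ht2, rfl⟩ | ⟨t, ht1, ht2, rfl⟩
    · exact main _ _ (by omega) (by omega) (by omega)
        ((giv_lt_iff m p hm3 hmo _ _ (by omega) (by omega) (by omega)).mpr
          (Or.inl (by omega)))
    · exact main _ _ (by omega) (by omega) (by omega)
        ((giv_lt_iff m p hm3 hmo _ _ (by omega) (by omega) (by omega)).mpr
          (Or.inr (Or.inl (by omega))))
    · exact main _ _ (by omega) (by omega) (by omega)
        ((giv_lt_iff m p hm3 hmo _ _ (by omega) (by omega) (by omega)).mpr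
          (Or.inr (Or.inr (Or.inl (by omega)))))
    · exact main _ _ (by omega) (by omega) (by omega)
        ((giv_lt_iff m p hm3 hmo _ _ (by omega) (by omega) (by omega)).mpr
          (Or.inr (Or.inr (Or.inr (Or.inl (by omega))))))
    · exact main _ _ (by omega) (by omega) (by omega)
        ((giv_lt_iff m p hm3 hmo _ _ (by omega) (by omega) (by omega)).mpr
          (Or.inr (Or.inr (Or.inr (Or.inr (Or.inl (by omega)))))))
    · exact main _ _ (by omega) (by omega) (by omega)
        ((giv_lt_iff m p hm3 hmo _ _ (by omega) (by omega) (by omega)).mpr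
          (Or.inr (Or.inr (Or.inr (Or.inr (Or.inr (Or.inl (by omega))))))))
    · exact main _ _ (by omega) (by omega) (by omega)
        ((giv_lt_iff m p hm3 hmo _ _ (by omega) (by omega) (by omega)).mpr
          (Or.inr (Or.inr (Or.inr (Or.inr (Or.inr (Or.inr (Or.inl (by omega)))))))))
    · exact main _ _ (by omega) (by omega) (by omega)
        ((giv_lt_iff m p hm3 hmo _ _ (by omega) (by omega) (by omega)).mpr
          (Or.inr (Or.inr (Or.inr (Or.inr (Or.inr (Or.inr (Or.inr (by omega)))))))))
end DPW
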